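/- Let {P_i} be Hermitian projections on ℂ^{d'} and {P̂_i} Hermitian projections on ℂ^{d̂'}; let Q (size d'×d̂') satisfy Q† Q = 1 and P_i Q = Q P̂_i for all i; let U be a d'×d' unitary with U P_i = P_i U for all i; let T (size d'×d) and T̂ (size d̂'×d) satisfy T† T = 1, T̂† T̂ = 1, and Q T̂ = U T. Then for every d×d matrix ρ and all indices i, j: ‖ P̂_i (T̂ ρ T̂†) P̂_j ‖₁ = ‖ P_i (T ρ T†) P_j ‖₁. Consequently the ℓ₁-norm of POVM-based coherence C_{ℓ₁}(ρ, E) = ∑_{i≠j} ‖P_i E[ρ] P_j‖₁ is invariant under the choice of Naimark extension. -/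

import Mathlib

open Matrix
open scoped ComplexOrder

/-- The trace norm `‖A‖₁ = tr √(Aᴴ A)` of a complex matrix. -/
noncomputable def traceNorm {m n : Type*} [Fintype m] [Fintype n] [DecidableEq n]
    (A : Matrix m n ℂ) : ℝ :=
  (((Matrix.posSemidef_conjTranspose_mul_self A).1.eigenvectorUnitary : Matrix n n ℂ) *
      diagonal (((↑) : ℝ → ℂ) ∘ (Real.sqrt ·) ∘
        (Matrix.posSemidef_conjTranspose_mul_self A).1.eigenvalues) *
      (star (Matrix.posSemidef_conjTranspose_mul_self A).1.eigenvectorUnitary :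
        Matrix n n ℂ)).trace.re

open scoped MatrixOrder in
lemma traceNorm_eq_cfcSqrt {m n : Type*} [Fintype m] [Fintype n] [DecidableEq n]
    (A : Matrix m n ℂ) : traceNorm A = (CFC.sqrt (Aᴴ * A)).trace.re := by
  have hA := Matrix.posSemidef_conjTranspose_mul_self A
  rw [CFC.sqrt_eq_cfc, cfc_nnreal_eq_real _ (Aᴴ * A) (nonneg_iff_posSemidef.mpr hA), hA.1.cfc_eq]
  unfold traceNorm
  simp only [IsHermitian.cfc, Unitary.conjStarAlgAut_apply, Real.coe_sqrt, Real.coe_toNNReal']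
  congr 5
  funext x
  simp [max_eq_left (hA.eigenvalues_nonneg x)]

open scoped MatrixOrder in
lemma traceNorm_conj_isometry {k l : Type*} [Fintype k] [Fintype l]
    [DecidableEq k] [DecidableEq l]
    (W : Matrix k l ℂ) (hW : Wᴴ * W = 1) (B : Matrix l l ℂ) :
    traceNorm (W * B * Wᴴ) = traceNorm B := by
  set hB := Matrix.posSemidef_conjTranspose_mul_self B
  have aux : ∀ X : Matrix l k ℂ, Wᴴ * (W * X) = X := fun X => by
    rw [← Matrix.mul_assoc, hW, Matrix.one_mul]
  have hpsd : Matrix.PosSemidef (W * CFC.sqrt (Bᴴ * B) * Wᴴ) := by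
    have := (nonneg_iff_posSemidef.mp (CFC.sqrt_nonneg (Bᴴ * B))).conjTranspose_mul_mul_same Wᴴ
    simpa using this
  have hsq : (W * CFC.sqrt (Bᴴ * B) * Wᴴ) ^ 2 = (W * B * Wᴴ)ᴴ * (W * B * Wᴴ) := by
    simp only [pow_two, Matrix.conjTranspose_mul, Matrix.conjTranspose_conjTranspose,
      Matrix.mul_assoc]
    rw [aux, aux, ← Matrix.mul_assoc (CFC.sqrt (Bᴴ * B)),
      CFC.sqrt_mul_sqrt_self _ (nonneg_iff_posSemidef.mpr hB), Matrix.mul_assoc]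
  have hsqrt : CFC.sqrt ((W * B * Wᴴ)ᴴ * (W * B * Wᴴ))
      = W * CFC.sqrt (Bᴴ * B) * Wᴴ :=
    (CFC.sqrt_eq_iff _ _
      (nonneg_iff_posSemidef.mpr (Matrix.posSemidef_conjTranspose_mul_self _))
      (nonneg_iff_posSemidef.mpr hpsd)).mpr (by rw [← pow_two]; exact hsq)
  rw [traceNorm_eq_cfcSqrt, traceNorm_eq_cfcSqrt, hsqrt, Matrix.trace_mul_cycle, hW, Matrix.one_mul]


/-- Let `{P i}` and `{P̂ i}` be Hermitian projections on two Naimark spaces,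
`Q` an isometry with `P i * Q = Q * P̂ i`, `U` a unitary commuting with every `P i`, and
`T`, `T̂` embedding isometries with `Q T̂ = U T`. Then for every `ρ` and all `i, j`:
`‖P̂ i (T̂ ρ T̂ᴴ) P̂ j‖₁ = ‖P i (T ρ Tᴴ) P j‖₁`; so the `ℓ₁`-norm of POVM-based coherence is
independent of the choice of Naimark extension. -/
theorem traceNorm_block_naimark_invariant
    (n d d' e' : ℕ)
    (P : Fin n → Matrix (Fin d') (Fin d') ℂ)
    (Phat : Fin n → Matrix (Fin e') (Fin e') ℂ)
    (hP : ∀ i, (P i)ᴴ = P i) (hPproj : ∀ i, P i * P i = P i)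
    (hPhat : ∀ i, (Phat i)ᴴ = Phat i) (hPhatproj : ∀ i, Phat i * Phat i = Phat i)
    (Q : Matrix (Fin d') (Fin e') ℂ) (hQ : Qᴴ * Q = 1)
    (hQP : ∀ i, P i * Q = Q * Phat i)
    (U : Matrix (Fin d') (Fin d') ℂ) (hU1 : Uᴴ * U = 1) (hU2 : U * Uᴴ = 1)
    (hUP : ∀ i, U * P i = P i * U)
    (T : Matrix (Fin d') (Fin d) ℂ) (hT : Tᴴ * T = 1)
    (That : Matrix (Fin e') (Fin d) ℂ) (hThat : Thatᴴ * That = 1)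
    (hQT : Q * That = U * T) :
    ∀ (ρ : Matrix (Fin d) (Fin d) ℂ) (i j : Fin n),
      traceNorm (Phat i * (That * ρ * Thatᴴ) * Phat j)
        = traceNorm (P i * (T * ρ * Tᴴ) * P j) := by
  intro ρ i j
  -- key: U * P i * T = Q * Phat i * That
  have key : ∀ i, U * (P i * T) = Q * (Phat i * That) := by
    intro i
    calc U * (P i * T) = P i * (U * T) := by rw [← Matrix.mul_assoc, hUP, Matrix.mul_assoc]
      _ = P i * (Q * That) := by rw [hQT]
      _ = Q * (Phat i * That) := by rw [← Matrix.mul_assoc, hQP, Matrix.mul_assoc]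
  have key' : ∀ j, (P j * T)ᴴ * Uᴴ = (Phat j * That)ᴴ * Qᴴ := by
    intro j
    rw [← Matrix.conjTranspose_mul, ← Matrix.conjTranspose_mul, key]
  have main : U * (P i * (T * ρ * Tᴴ) * P j) * Uᴴ
      = Q * (Phat i * (That * ρ * Thatᴴ) * Phat j) * Qᴴ := by
    have hl := key i
    have hr := key' j
    calc U * (P i * (T * ρ * Tᴴ) * P j) * Uᴴ
        = (U * (P i * T)) * ρ * ((P j * T)ᴴ * Uᴴ) := by
          simp only [Matrix.conjTranspose_mul, hP, Matrix.mul_assoc]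
      _ = (Q * (Phat i * That)) * ρ * ((Phat j * That)ᴴ * Qᴴ) := by rw [hl, hr]
      _ = Q * (Phat i * (That * ρ * Thatᴴ) * Phat j) * Qᴴ := by
          simp only [Matrix.conjTranspose_mul, hPhat, Matrix.mul_assoc]
  calc traceNorm (Phat i * (That * ρ * Thatᴴ) * Phat j)
      = traceNorm (Q * (Phat i * (That * ρ * Thatᴴ) * Phat j) * Qᴴ) :=
        (traceNorm_conj_isometry Q hQ _).symm
    _ = traceNorm (U * (P i * (T * ρ * Tᴴ) * P j) * Uᴴ) := by rw [main]
    _ = traceNorm (P i * (T * ρ * Tᴴ) * P j) := traceNorm_conj_isometry U hU1 _
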